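/- arXiv:1405.3237 — 3 statements merged into one kernel-verified Lean document; each statement's English description precedes it below -/
import Mathlib

section
/- Let G be a group satisfying (H1), let A be a basal subgroup of G, and let H ∈ L(G) with C_G(H) = C_G(A). Then H ≤ R(A). (That is, the rigid normalizer R(A) is an upper bound for the equivalence class of A.) -/
variable {G : Type*} [Group G]

/-- The conjugate `B ^ g = g⁻¹ * B * g` of a subgroup `B` by an element `g`. -/
def conjBy (B : Subgroup G) (g : G) : Subgroup G :=
  B.map (MulAut.conj g⁻¹).toMonoidHom

/-- A subgroup is virtually solvable if it has a solvable subgroup of finite index. -/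
def VirtSolvable (H : Subgroup G) : Prop :=
  ∃ M : Subgroup G, M ≤ H ∧ M.relIndex H ≠ 0 ∧ IsSolvable ↥M

/-- A subgroup is virtually nilpotent if it has a nilpotent subgroup of finite index. -/
def VirtNilpotent (H : Subgroup G) : Prop :=
  ∃ M : Subgroup G, M ≤ H ∧ M.relIndex H ≠ 0 ∧ Group.IsNilpotent ↥M

/-- Hypothesis (H1): every virtually solvable subgroup whose normalizer has finite index
(i.e. belonging to `L(G)`) is trivial. -/
def HypH1 (G : Type*) [Group G] : Prop :=
  ∀ H : Subgroup G, (Subgroup.normalizer (H : Set G)).FiniteIndex → VirtSolvable H → H = ⊥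

/-- Hypothesis (H2): every nontrivial normal subgroup of `G` contains the derived subgroup
of some finite-index subgroup of `G`. -/
def HypH2 (G : Type*) [Group G] : Prop :=
  ∀ N : Subgroup G, N.Normal → N ≠ ⊥ →
    ∃ G₀ : Subgroup G, G₀.FiniteIndex ∧ ⁅G₀, G₀⁆ ≤ N

/-- `VA K H` means `K ≤va H`: `K ≤ H` and `K` contains the derived subgroup of some
finite-index subgroup of `H`. -/
def VA (K H : Subgroup G) : Prop :=
  K ≤ H ∧ ∃ A : Subgroup G, A ≤ H ∧ A.relIndex H ≠ 0 ∧ ⁅A, A⁆ ≤ K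

/-- A subgroup `B` is basal if its normalizer has finite index and every conjugate of `B`
either equals `B` or meets `B` trivially. -/
def IsBasal (B : Subgroup G) : Prop :=
  (Subgroup.normalizer (B : Set G)).FiniteIndex ∧ ∀ g : G, conjBy B g = B ∨ conjBy B g ⊓ B = ⊥

/-- The rigid normalizer `R(A)` of a basal subgroup `A`: the intersection of the
normalizers of all basal subgroups meeting `A` trivially. -/
def rigidNormalizer (A : Subgroup G) : Subgroup G :=
  ⨅ B ∈ {B : Subgroup G | IsBasal B ∧ A ⊓ B = ⊥}, Subgroup.normalizer (B : Set G)

lemma mem_conjBy {B : Subgroup G} {g x : G} : x ∈ conjBy B g ↔ g * x * g⁻¹ ∈ B := by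
  constructor
  · rintro ⟨b, hb, rfl⟩
    simpa [MulAut.conj, mul_assoc] using hb
  · intro h
    exact ⟨g * x * g⁻¹, h, by simp [MulAut.conj]; group⟩

lemma conjBy_inf (X Y : Subgroup G) (g : G) :
    conjBy (X ⊓ Y) g = conjBy X g ⊓ conjBy Y g :=
  Subgroup.map_inf X Y _ (MulAut.conj g⁻¹).injective

lemma mem_normalizer_iff_conjBy {W : Subgroup G} {g : G} :
    g ∈ (Subgroup.normalizer (W : Set G)) ↔ conjBy W g = W := by
  rw [Subgroup.mem_normalizer_iff]
  constructor
  · intro h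
    ext x
    rw [mem_conjBy]
    exact (h x).symm
  · intro h x
    conv_lhs => rw [← h, mem_conjBy]

lemma conjBy_self_mem {K : Subgroup G} {k : G} (hk : k ∈ K) : conjBy K k = K :=
  mem_normalizer_iff_conjBy.mp (Subgroup.le_normalizer hk)

lemma normalizer_conjBy (B : Subgroup G) (g : G) :
    (Subgroup.normalizer (((conjBy B g) : Subgroup G) : Set G)) = conjBy (Subgroup.normalizer (B : Set G)) g :=
  (Subgroup.map_equiv_normalizer_eq B (MulAut.conj g⁻¹)).symm

lemma index_conjBy (B : Subgroup G) (g : G) : (conjBy B g).index = B.index :=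
  Subgroup.index_map_eq B (MulAut.conj g⁻¹).surjective
    (by rw [(MulAut.conj g⁻¹).toMonoidHom.ker_eq_bot_iff.mpr (MulAut.conj g⁻¹).injective]; exact bot_le)

lemma conjBy_eq_comap (H : Subgroup G) (g : G) :
    conjBy H g = H.comap (MulAut.conj g).toMonoidHom := by
  ext x
  rw [mem_conjBy, Subgroup.mem_comap]
  simp [MulAut.conj]

lemma relindex_conjBy (H K : Subgroup G) (g : G) :
    (conjBy H g).relIndex (conjBy K g) = H.relIndex K := by
  rw [conjBy_eq_comap H g, Subgroup.relIndex_comap, conjBy_eq_comap K g,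
    Subgroup.map_comap_eq_self_of_surjective (MulAut.conj g).surjective]

/-- Abelian members of `L(G)` are trivial under (H1). -/
lemma eq_bot_of_comm (hH1 : HypH1 G) {Z : Subgroup G} (hZn : (Subgroup.normalizer (Z : Set G)).FiniteIndex)
    (hcomm : ∀ a ∈ Z, ∀ b ∈ Z, a * b = b * a) : Z = ⊥ := by
  refine hH1 Z hZn ⟨Z, le_rfl, by rw [Subgroup.relIndex_self]; exact one_ne_zero, ?_⟩
  exact isSolvable_of_comm fun a b => Subtype.ext (hcomm a a.2 b b.2)

/-- Finite members of `L(G)` are trivial under (H1). -/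
lemma eq_bot_of_finite (hH1 : HypH1 G) {W : Subgroup G} (hWn : (Subgroup.normalizer (W : Set G)).FiniteIndex)
    (hW : Finite ↥W) : W = ⊥ := by
  refine hH1 W hWn ⟨⊥, bot_le, ?_, ?_⟩
  · rw [Subgroup.relIndex_bot_left]
    exact Nat.card_ne_zero.mpr ⟨⟨1, one_mem W⟩, hW⟩
  · exact isSolvable_of_comm fun a b => Subtype.ext (by
      have ha : (a : G) = 1 := Subgroup.mem_bot.mp a.2
      have hb : (b : G) = 1 := Subgroup.mem_bot.mp b.2
      show (a : G) * b = (b : G) * a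
      rw [ha, hb])

/-- `L(G)` is stable under intersections (at the level of normalizer finite index). -/
lemma inf_normalizer_finiteIndex {X Y : Subgroup G} (hX : (Subgroup.normalizer (X : Set G)).FiniteIndex)
    (hY : (Subgroup.normalizer (Y : Set G)).FiniteIndex) : (Subgroup.normalizer (((X ⊓ Y) : Subgroup G) : Set G)).FiniteIndex := by
  have h : (Subgroup.normalizer (X : Set G)) ⊓ (Subgroup.normalizer (Y : Set G)) ≤ (Subgroup.normalizer (((X ⊓ Y) : Subgroup G) : Set G)) := by
    intro g hg
    rw [mem_normalizer_iff_conjBy, conjBy_inf,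
      mem_normalizer_iff_conjBy.mp hg.1, mem_normalizer_iff_conjBy.mp hg.2]
  haveI : ((Subgroup.normalizer (X : Set G)) ⊓ (Subgroup.normalizer (Y : Set G))).FiniteIndex :=
    ⟨Subgroup.index_inf_ne_zero hX.index_ne_zero hY.index_ne_zero⟩
  exact Subgroup.finiteIndex_of_le h

/-- The normalizer of a subgroup normalizes its centralizer (via `conjBy`). -/
lemma conjBy_centralizer_of_mem_normalizer {V : Subgroup G} {g : G} (hg : g ∈ (Subgroup.normalizer (V : Set G))) :
    conjBy (Subgroup.centralizer (V : Set G)) g = Subgroup.centralizer (V : Set G) := by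
  ext x
  rw [mem_conjBy, Subgroup.mem_centralizer_iff, Subgroup.mem_centralizer_iff]
  constructor
  · intro h v hv
    have hv' : g * v * g⁻¹ ∈ V := (Subgroup.mem_normalizer_iff.mp hg v).mp hv
    have h2 := h _ hv'
    -- h2 : (g*v*g⁻¹) * (g*x*g⁻¹) = (g*x*g⁻¹) * (g*v*g⁻¹)
    have e1 : g * (v * x) * g⁻¹ = g * (x * v) * g⁻¹ := by
      have a1 : g * (v * x) * g⁻¹ = (g*v*g⁻¹) * (g*x*g⁻¹) := by group
      have a2 : g * (x * v) * g⁻¹ = (g*x*g⁻¹) * (g*v*g⁻¹) := by group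
      rw [a1, a2, h2]
    calc v * x = g⁻¹ * (g * (v*x) * g⁻¹) * g := by group
      _ = g⁻¹ * (g * (x*v) * g⁻¹) * g := by rw [e1]
      _ = x * v := by group
  · intro h v hv
    have hv' : g⁻¹ * v * g ∈ V := (Subgroup.mem_normalizer_iff''.mp hg v).mp hv
    have h2 := h _ hv'
    have a1 : (g * x * g⁻¹) * v = g * (x * (g⁻¹ * v * g)) * g⁻¹ := by group
    have a2 : v * (g * x * g⁻¹) = g * ((g⁻¹ * v * g) * x) * g⁻¹ := by group
    rw [a1, a2, h2]

/-- Under (H1), if `V ≤ K` has finite relative index and both are in `L(G)`,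
then the centralizer of `V` meets `K` trivially. -/
lemma centralizer_inf_eq_bot (hH1 : HypH1 G) {K V : Subgroup G}
    (hKn : (Subgroup.normalizer (K : Set G)).FiniteIndex) (hVn : (Subgroup.normalizer (V : Set G)).FiniteIndex)
    (hVK : V ≤ K) (hrel : V.relIndex K ≠ 0) :
    Subgroup.centralizer (V : Set G) ⊓ K = ⊥ := by
  have hCn : ∀ L : Subgroup G, (Subgroup.normalizer (L : Set G)).FiniteIndex →
      (Subgroup.normalizer (((Subgroup.centralizer (V : Set G) ⊓ L) : Subgroup G) : Set G)).FiniteIndex := by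
    intro L hLn
    have h : (Subgroup.normalizer (V : Set G)) ⊓ (Subgroup.normalizer (L : Set G)) ≤ (Subgroup.normalizer (((Subgroup.centralizer (V : Set G) ⊓ L) : Subgroup G) : Set G)) := by
      intro g hg
      rw [mem_normalizer_iff_conjBy, conjBy_inf, conjBy_centralizer_of_mem_normalizer hg.1,
        mem_normalizer_iff_conjBy.mp hg.2]
    haveI : ((Subgroup.normalizer (V : Set G)) ⊓ (Subgroup.normalizer (L : Set G))).FiniteIndex :=
      ⟨Subgroup.index_inf_ne_zero hVn.index_ne_zero hLn.index_ne_zero⟩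
    exact Subgroup.finiteIndex_of_le h
  -- the center of V is trivial
  have hZ : Subgroup.centralizer (V : Set G) ⊓ V = ⊥ := by
    refine eq_bot_of_comm hH1 (hCn V hVn) ?_
    intro a ha b hb
    exact (Subgroup.mem_centralizer_iff.mp ha.1 b hb.2).symm
  -- W := C(V) ⊓ K is finite
  set W := Subgroup.centralizer (V : Set G) ⊓ K with hWdef
  have hWV : ∀ x, x ∈ W → x ∈ V → x = 1 := by
    intro x hx hxV
    have : x ∈ Subgroup.centralizer (V : Set G) ⊓ V := ⟨hx.1, hxV⟩
    rw [hZ] at this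
    exact Subgroup.mem_bot.mp this
  have hfin : Finite ↥W := by
    have hq : Finite (K ⧸ V.subgroupOf K) :=
      (Nat.card_ne_zero.mp hrel).2
    have hinj : Function.Injective
        (fun w : ↥W => ((⟨(w : G), (inf_le_right : W ≤ K) w.2⟩ : K) : K ⧸ V.subgroupOf K)) := by
      intro w₁ w₂ h
      have h' : (⟨(w₁ : G), _⟩ : K)⁻¹ * ⟨(w₂ : G), _⟩ ∈ V.subgroupOf K := QuotientGroup.eq.mp h
      have hV : (w₁ : G)⁻¹ * w₂ ∈ V := h'
      have hW : (w₁ : G)⁻¹ * w₂ ∈ W := mul_mem (inv_mem w₁.2) w₂.2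
      have := hWV _ hW hV
      exact Subtype.ext (inv_mul_eq_one.mp this)
    exact Finite.of_injective _ hinj
  exact eq_bot_of_finite hH1 (hCn K hKn) hfin

/-- Under (H1), a basal subgroup has the same centralizer as any of its
finite-index subgroups belonging to `L(G)`. -/
lemma centralizer_eq_of_relindex_ne_zero (hH1 : HypH1 G) {K K₀ : Subgroup G}
    (hK : IsBasal K) (hle : K₀ ≤ K) (hK₀n : (Subgroup.normalizer (K₀ : Set G)).FiniteIndex)
    (hrel : K₀.relIndex K ≠ 0) :
    Subgroup.centralizer (K₀ : Set G) = Subgroup.centralizer (K : Set G) := by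
  rcases eq_or_ne K₀ ⊥ with h0 | h0
  · -- then K is finite, hence trivial
    have hKfin : Finite ↥K := by
      rw [h0, Subgroup.relIndex_bot_left] at hrel
      exact (Nat.card_ne_zero.mp hrel).2
    have hKbot : K = ⊥ := eq_bot_of_finite hH1 hK.1 hKfin
    rw [h0, hKbot]
  · refine le_antisymm ?_ (Subgroup.centralizer_le (SetLike.coe_subset_coe.mpr hle))
    intro c hc
    rw [Subgroup.mem_centralizer_iff]
    intro k hk
    -- c commutes with K₀ pointwise, so conjBy K c ⊓ K ⊇ K₀ ≠ ⊥, and basality gives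
    -- conjBy K c = K
    have hcK : conjBy K c = K := by
      rcases hK.2 c with h | h
      · exact h
      · exfalso
        apply h0
        rw [← le_bot_iff, ← h]
        refine le_inf ?_ hle
        intro u hu
        rw [mem_conjBy]
        have hcu : u * c = c * u := Subgroup.mem_centralizer_iff.mp hc u hu
        have : c * u * c⁻¹ = u := by rw [← hcu]; group
        rw [this]
        exact hle hu
    have hkc : c⁻¹ * k * c ∈ K := by
      have : c⁻¹ * k * c ∈ conjBy K c := by
        rw [mem_conjBy]
        have : c * (c⁻¹ * k * c) * c⁻¹ = k := by group
        rw [this]; exact hk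
      rwa [hcK] at this
    -- V := K₀ ⊓ K₀ᵏ
    set V : Subgroup G := K₀ ⊓ conjBy K₀ k with hVdef
    have hVle : V ≤ K := le_trans inf_le_left hle
    have hVn : (Subgroup.normalizer (V : Set G)).FiniteIndex := by
      refine inf_normalizer_finiteIndex hK₀n ?_
      rw [normalizer_conjBy]
      exact ⟨by rw [index_conjBy]; exact hK₀n.index_ne_zero⟩
    have hVrel : V.relIndex K ≠ 0 := by
      refine Subgroup.relIndex_inf_ne_zero hrel ?_
      have : (conjBy K₀ k).relIndex K = K₀.relIndex K := by
        conv_lhs => rw [← conjBy_self_mem hk]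
        exact relindex_conjBy K₀ K k
      rw [this]; exact hrel
    have hbot := centralizer_inf_eq_bot hH1 hK.1 hVn hVle hVrel
    -- x := [k, c] lies in C(V) ⊓ K = ⊥
    have hxC : k⁻¹ * (c⁻¹ * k * c) ∈ Subgroup.centralizer (V : Set G) := by
      rw [Subgroup.mem_centralizer_iff]
      intro u hu
      have hu₀ : u ∈ K₀ := hu.1
      have hu₁ : k * u * k⁻¹ ∈ K₀ := mem_conjBy.mp hu.2
      have h1 : u * c = c * u := Subgroup.mem_centralizer_iff.mp hc u hu₀
      have h2 : (k * u * k⁻¹) * c = c * (k * u * k⁻¹) := Subgroup.mem_centralizer_iff.mp hc _ hu₁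
      have hw' : c⁻¹ * (k * u * k⁻¹) = (k * u * k⁻¹) * c⁻¹ := by
        calc c⁻¹ * (k * u * k⁻¹) = c⁻¹ * ((k * u * k⁻¹) * c) * c⁻¹ := by group
          _ = c⁻¹ * (c * (k * u * k⁻¹)) * c⁻¹ := by rw [h2]
          _ = (k * u * k⁻¹) * c⁻¹ := by group
      apply mul_left_cancel (a := k)
      calc k * (u * (k⁻¹ * (c⁻¹ * k * c)))
          = ((k * u * k⁻¹) * c⁻¹) * (k * c) := by group
        _ = (c⁻¹ * (k * u * k⁻¹)) * (k * c) := by rw [hw']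
        _ = c⁻¹ * k * (u * c) := by group
        _ = c⁻¹ * k * (c * u) := by rw [h1]
        _ = k * ((k⁻¹ * (c⁻¹ * k * c)) * u) := by group
    have hxK : k⁻¹ * (c⁻¹ * k * c) ∈ K := mul_mem (inv_mem hk) hkc
    have hx1 : k⁻¹ * (c⁻¹ * k * c) = 1 := by
      have : k⁻¹ * (c⁻¹ * k * c) ∈ Subgroup.centralizer (V : Set G) ⊓ K := ⟨hxC, hxK⟩
      rw [hbot] at this
      exact Subgroup.mem_bot.mp this
    have h3 : k = c⁻¹ * k * c := inv_mul_eq_one.mp hx1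
    have h4 : c * k = c * (c⁻¹ * k * c) := by rw [← h3]
    have h5 : c * (c⁻¹ * k * c) = k * c := by group
    exact (h4.trans h5).symm

lemma centralizer_le_normalizer' (B : Subgroup G) :
    Subgroup.centralizer (B : Set G) ≤ (Subgroup.normalizer (B : Set G)) := by
  intro g hg
  rw [Subgroup.mem_normalizer_iff]
  intro h
  constructor
  · intro hh
    have := Subgroup.mem_centralizer_iff.mp hg h hh
    have e : g * h * g⁻¹ = h := by rw [← this]; group
    rwa [e]
  · intro hh
    have := Subgroup.mem_centralizer_iff.mp hg _ hh
    have e : h = g⁻¹ * (g * h * g⁻¹) * g := by group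
    have e2 : g⁻¹ * (g * h * g⁻¹) * g = g * h * g⁻¹ := by
      rw [mul_assoc g⁻¹ (g * h * g⁻¹) g, this]; group
    rw [e, e2]
    exact hh


theorem statement14 (hH1 : HypH1 G) (A : Subgroup G) (hA : IsBasal A)
    (H : Subgroup G) (hHL : (Subgroup.normalizer (H : Set G)).FiniteIndex)
    (hc : Subgroup.centralizer (H : Set G) = Subgroup.centralizer (A : Set G)) :
    H ≤ rigidNormalizer A := by
  refine le_iInf₂ fun B hB => ?_
  obtain ⟨hBb, hAB⟩ := hB
  have hNA : (Subgroup.normalizer (A : Set G)).FiniteIndex := hA.1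
  have hNB : (Subgroup.normalizer (B : Set G)).FiniteIndex := hBb.1
  have hNNA : (Subgroup.normalizer (((Subgroup.normalizer (A : Set G)) : Subgroup G) : Set G)).FiniteIndex := Subgroup.finiteIndex_of_le Subgroup.le_normalizer
  have hNNB : (Subgroup.normalizer (((Subgroup.normalizer (B : Set G)) : Subgroup G) : Set G)).FiniteIndex := Subgroup.finiteIndex_of_le Subgroup.le_normalizer
  -- A₀ = A ⊓ N(B), B₀ = B ⊓ N(A)
  have hA₀n : (Subgroup.normalizer (((A ⊓ (Subgroup.normalizer (B : Set G))) : Subgroup G) : Set G)).FiniteIndex := inf_normalizer_finiteIndex hNA hNNB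
  have hB₀n : (Subgroup.normalizer (((B ⊓ (Subgroup.normalizer (A : Set G))) : Subgroup G) : Set G)).FiniteIndex := inf_normalizer_finiteIndex hNB hNNA
  have hA₀rel : (A ⊓ (Subgroup.normalizer (B : Set G))).relIndex A ≠ 0 := by
    rw [Subgroup.inf_relIndex_left]
    intro h
    exact hNB.index_ne_zero (Subgroup.index_eq_zero_of_relIndex_eq_zero h)
  have hB₀rel : (B ⊓ (Subgroup.normalizer (A : Set G))).relIndex B ≠ 0 := by
    rw [Subgroup.inf_relIndex_left]
    intro h
    exact hNA.index_ne_zero (Subgroup.index_eq_zero_of_relIndex_eq_zero h)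
  have hCA₀ : Subgroup.centralizer ((A ⊓ (Subgroup.normalizer (B : Set G)) : Subgroup G) : Set G)
      = Subgroup.centralizer (A : Set G) :=
    centralizer_eq_of_relindex_ne_zero hH1 hA inf_le_left hA₀n hA₀rel
  have hCB₀ : Subgroup.centralizer ((B ⊓ (Subgroup.normalizer (A : Set G)) : Subgroup G) : Set G)
      = Subgroup.centralizer (B : Set G) :=
    centralizer_eq_of_relindex_ne_zero hH1 hBb inf_le_left hB₀n hB₀rel
  -- B₀ centralizes A₀
  have hB₀A₀ : B ⊓ (Subgroup.normalizer (A : Set G)) ≤ Subgroup.centralizer ((A ⊓ (Subgroup.normalizer (B : Set G)) : Subgroup G) : Set G) := by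
    rintro b ⟨hbB, hbNA⟩
    rw [Subgroup.mem_centralizer_iff]
    rintro a ⟨haA, haNB⟩
    -- the commutator a⁻¹ * (b⁻¹ * a * b) lies in A ⊓ B = ⊥
    have h1 : b⁻¹ * a * b ∈ A := (Subgroup.mem_normalizer_iff''.mp hbNA a).mp haA
    have h2 : a⁻¹ * b⁻¹ * a ∈ B :=
      (Subgroup.mem_normalizer_iff''.mp haNB b⁻¹).mp (inv_mem hbB)
    have hxA : a⁻¹ * (b⁻¹ * a * b) ∈ A := mul_mem (inv_mem haA) h1
    have hxB : a⁻¹ * (b⁻¹ * a * b) ∈ B := by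
      have e : a⁻¹ * (b⁻¹ * a * b) = (a⁻¹ * b⁻¹ * a) * b := by group
      rw [e]
      exact mul_mem h2 hbB
    have hx1 : a⁻¹ * (b⁻¹ * a * b) = 1 := by
      have : a⁻¹ * (b⁻¹ * a * b) ∈ A ⊓ B := ⟨hxA, hxB⟩
      rw [hAB] at this
      exact Subgroup.mem_bot.mp this
    have h3 : a = b⁻¹ * a * b := inv_mul_eq_one.mp hx1
    have h4 : b * a = b * (b⁻¹ * a * b) := by rw [← h3]
    have h5 : b * (b⁻¹ * a * b) = a * b := by group
    exact ((h4.trans h5).symm)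
  -- hence B₀ ≤ C(A) = C(H), so H ≤ C(B₀) = C(B) ≤ N(B)
  have hB₀CH : B ⊓ (Subgroup.normalizer (A : Set G)) ≤ Subgroup.centralizer (H : Set G) := by
    rw [hc, ← hCA₀]
    exact hB₀A₀
  have hHCB₀ : H ≤ Subgroup.centralizer ((B ⊓ (Subgroup.normalizer (A : Set G)) : Subgroup G) : Set G) := by
    intro h hh
    rw [Subgroup.mem_centralizer_iff]
    intro b hb
    exact (Subgroup.mem_centralizer_iff.mp (hB₀CH hb) h hh).symm
  rw [hCB₀] at hHCB₀
  exact le_trans hHCB₀ (centralizer_le_normalizer' B)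
end

section
/- Let G be a group, B a subgroup of G, N a subgroup of the normalizer N_G(B), g an element of B, and V a subgroup of G such that every element of the conjugate V^g = g⁻¹Vg commutes with every element of V. Then the commutator subgroup [V ∩ N, V ∩ N] is contained in B. (This is the key computation showing that every nontrivial subgroup with finitely many conjugates in a branch group contains (rst(v) ∩ N)' for some vertex v.) -/
variable {G : Type*} [Group G]

theorem statement16 (B N V : Subgroup G) (hN : N ≤ Subgroup.normalizer (B : Set G)) (g : G) (hg : g ∈ B)
    (hcomm : ∀ x ∈ conjBy V g, ∀ y ∈ V, Commute x y) :
    ⁅V ⊓ N, V ⊓ N⁆ ≤ B := by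
  rw [Subgroup.commutator_le]
  rintro x ⟨hxV, hxN⟩ y ⟨hyV, hyN⟩
  obtain ⟨c, hc⟩ : ∃ c, c = g⁻¹ * x * g := ⟨_, rfl⟩
  have hcV : c ∈ conjBy V g := by
    rw [hc]
    exact ⟨x, hxV, by simp [mul_assoc]⟩
  have hcy : c * y = y * c := (hcomm c hcV y hyV).eq
  have h2 : y * c * y⁻¹ = c := by
    rw [← hcy, mul_assoc, mul_inv_cancel, mul_one]
  have hxn : x ∈ Subgroup.normalizer (B : Set G) := hN hxN
  have hyn : y ∈ Subgroup.normalizer (B : Set G) := hN hyN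
  have hb : x * c⁻¹ ∈ B := by
    have h1 : x * g⁻¹ * x⁻¹ ∈ B := (Subgroup.mem_normalizer_iff.mp hxn g⁻¹).mp (inv_mem hg)
    have : x * c⁻¹ = (x * g⁻¹ * x⁻¹) * g := by rw [hc]; group
    rw [this]
    exact mul_mem h1 hg
  have hb2 : y * (c * x⁻¹) * y⁻¹ ∈ B := by
    have hd : c * x⁻¹ ∈ B := by
      have : c * x⁻¹ = (x * c⁻¹)⁻¹ := by group
      rw [this]; exact inv_mem hb
    exact (Subgroup.mem_normalizer_iff.mp hyn (c * x⁻¹)).mp hd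
  have e : (open scoped commutatorElement in ⁅x, y⁆) = (x * c⁻¹) * (y * (c * x⁻¹) * y⁻¹) := by
    rw [commutatorElement_def]
    calc x * y * x⁻¹ * y⁻¹ = x * (y * c * y⁻¹)⁻¹ * (y * (c * x⁻¹) * y⁻¹) := by group
    _ = x * c⁻¹ * (y * (c * x⁻¹) * y⁻¹) := by rw [h2]
    _ = (x * c⁻¹) * (y * (c * x⁻¹) * y⁻¹) := by group
  rw [e]
  exact mul_mem hb hb2
end

section
/- Let G be a group satisfying (H1). Let V₂ ∈ L(G), and let V, W be subgroups of G with V₂ ≤ W and V ∩ V₂ = 1. Suppose there is a subgroup W₀ of finite index in W whose derived subgroup satisfies [W₀, W₀] ≤ V. Then V₂ = 1. (This is the key step showing that the map v ↦ [rst(v)] from a tree carrying a branch action of G to the structure graph of G is injective: if v ≠ w were comparable vertices with rst(v) ~ rst(w), a sibling rigid stabilizer V₂ = rst(v₂) would violate this statement.) -/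
variable {G : Type*} [Group G]

open scoped commutatorElement

theorem statement17 (hH1 : HypH1 G) (V₂ : Subgroup G)
    (hV₂ : (Subgroup.normalizer (V₂ : Set G)).FiniteIndex)
    (V W : Subgroup G) (hV₂W : V₂ ≤ W) (hVV₂ : V ⊓ V₂ = ⊥)
    (W₀ : Subgroup G) (hW₀ : W₀ ≤ W) (hW₀fin : W₀.relIndex W ≠ 0)
    (hW₀c : ⁅W₀, W₀⁆ ≤ V) :
    V₂ = ⊥ := by
  apply hH1 V₂ hV₂
  refine ⟨W₀ ⊓ V₂, inf_le_right, ?_, ?_⟩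
  · rw [Subgroup.inf_relIndex_right]
    intro h
    exact hW₀fin (Subgroup.relIndex_eq_zero_of_le_right hV₂W h)
  · apply isSolvable_of_comm
    intro a b
    have hcomm : ⁅(a : G), (b : G)⁆ ∈ V ⊓ V₂ := by
      constructor
      · exact hW₀c (Subgroup.commutator_mem_commutator a.2.1 b.2.1)
      · exact V₂.mul_mem (V₂.mul_mem (V₂.mul_mem a.2.2 b.2.2) (V₂.inv_mem a.2.2)) (V₂.inv_mem b.2.2)
    rw [hVV₂, Subgroup.mem_bot, commutatorElement_eq_one_iff_mul_comm] at hcomm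
    exact Subtype.ext hcomm
end
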